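/- Extra variables destroy full abstraction even with constructors of every needed arity (Example 3): with FS = {f/1, h/1, g/1} and CS containing 0/0, 1/0, 2/0 (and a constructor of each arity up to the maximum function arity), for the program P = { f 1 → 2, h X → f (Y X) } (extra variable Y): for every partial pattern φ, 1 ∉ ⟦φ 0⟧^P ∪ ⟦φ 1⟧^P, hence ⟦h 0⟧^P = {⊥} = ⟦h 1⟧^P; but for the safe extension P' = P ⊎ { g 0 → 1 } one has 2 ∈ ⟦h 0⟧^{P'} while 2 ∉ ⟦h 1⟧^{P'}. -/

import Mathlib

/-- A signature: function symbols and constructor symbols, each with an arity. -/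
structure Sig where
  FS : Type
  CS : Type
  arityF : FS → ℕ
  arityC : CS → ℕ

/-- Applicative partial expressions over a signature.  Variables are natural
numbers and `bot` is the distinguished 0-ary constructor `⊥`. -/
inductive Exp (σ : Sig) : Type where
  | var : ℕ → Exp σ
  | fn : σ.FS → Exp σ
  | cn : σ.CS → Exp σ
  | bot : Exp σ
  | app : Exp σ → Exp σ → Exp σ

variable {σ : Sig}

/-- `applyList e [e1, …, en]` is the curried application `e e1 … en`. -/
def applyList (e : Exp σ) (es : List (Exp σ)) : Exp σ := es.foldl Exp.app e

/-- Partial patterns `Pat_⊥`. -/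
inductive IsPPat : Exp σ → Prop where
  | var (x : ℕ) : IsPPat (Exp.var x)
  | bot : IsPPat (Exp.bot : Exp σ)
  | capp (c : σ.CS) (ts : List (Exp σ)) (har : ts.length ≤ σ.arityC c)
      (hts : ∀ t ∈ ts, IsPPat t) : IsPPat (applyList (Exp.cn c) ts)
  | fapp (f : σ.FS) (ts : List (Exp σ)) (har : ts.length < σ.arityF f)
      (hts : ∀ t ∈ ts, IsPPat t) : IsPPat (applyList (Exp.fn f) ts)

/-- The constructor `⊥` does not occur in the expression. -/
def BotFree : Exp σ → Prop
  | .bot => False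
  | .app a b => BotFree a ∧ BotFree b
  | _ => True

/-- Total patterns `Pat`. -/
def IsPat (t : Exp σ) : Prop := IsPPat t ∧ BotFree t

/-- First-order patterns `FOPat`. -/
inductive IsFOPat : Exp σ → Prop where
  | var (x : ℕ) : IsFOPat (Exp.var x)
  | capp (c : σ.CS) (ts : List (Exp σ)) (har : ts.length = σ.arityC c)
      (hts : ∀ t ∈ ts, IsFOPat t) : IsFOPat (applyList (Exp.cn c) ts)

/-- The list of occurrences of variables in an expression. -/
def occVars : Exp σ → List ℕ
  | .var x => [x]
  | .app a b => occVars a ++ occVars b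
  | _ => []

/-- Applying a substitution to an expression. -/
def subst (θ : ℕ → Exp σ) : Exp σ → Exp σ
  | .var x => θ x
  | .fn f => .fn f
  | .cn c => .cn c
  | .bot => .bot
  | .app a b => .app (subst θ a) (subst θ b)

/-- Partial-pattern substitutions `PSubst_⊥`. -/
def PSub (θ : ℕ → Exp σ) : Prop := ∀ x, IsPPat (θ x)

/-- A program rule `f t1 … tn → r` (the left-hand side is `f` applied to `lhs`). -/
structure Rule (σ : Sig) where
  fn : σ.FS
  lhs : List (Exp σ)
  rhs : Exp σ

/-- Well-formedness of a rule: `f` is applied to as many arguments as its arity,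
the arguments form a linear tuple of total patterns. -/
def Rule.WF (r : Rule σ) : Prop :=
  r.lhs.length = σ.arityF r.fn ∧ (∀ t ∈ r.lhs, IsPat t) ∧
    (r.lhs.flatMap occVars).Nodup

/-- The rule has no extra variables: all variables of the right-hand side occur
in the left-hand side. -/
def Rule.NoExtra (r : Rule σ) : Prop :=
  ∀ x ∈ occVars r.rhs, x ∈ r.lhs.flatMap occVars

abbrev Program (σ : Sig) := Set (Rule σ)

/-- A program without extra variables, all whose rules are well formed. -/
def WFProg (P : Program σ) : Prop := ∀ r ∈ P, r.WF ∧ r.NoExtra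

/-- `h ∈ Σ` (a function symbol, a constructor symbol, or `⊥`). -/
def IsSymb : Exp σ → Prop
  | .fn _ => True
  | .cn _ => True
  | .bot => True
  | _ => False

/-- HOCRWL derivation trees for statements `e ⇒ t`, with rules
(B), (RR), (DC) and (OR). -/
inductive DTree (P : Program σ) : Exp σ → Exp σ → Type where
  | bot (e : Exp σ) : DTree P e Exp.bot
  | rr (x : ℕ) : DTree P (Exp.var x) (Exp.var x)
  | dc (h : Exp σ) (es ts : List (Exp σ)) (hsym : IsSymb h)
      (hlen : es.length = ts.length) (hpat : IsPPat (applyList h ts))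
      (ds : ∀ p ∈ es.zip ts, DTree P p.1 p.2) :
      DTree P (applyList h es) (applyList h ts)
  | opr (r : Rule σ) (hr : r ∈ P) (θ : ℕ → Exp σ) (hθ : PSub θ)
      (es as : List (Exp σ)) (t : Exp σ) (hlen : es.length = r.lhs.length)
      (ds : ∀ p ∈ es.zip (r.lhs.map (subst θ)), DTree P p.1 p.2)
      (d : DTree P (applyList (subst θ r.rhs) as) t) :
      DTree P (applyList (Exp.fn r.fn) (es ++ as)) t

/-- `P ⊢ e ⇒ t` is derivable in the HOCRWL proof calculus. -/
def Deriv (P : Program σ) (e t : Exp σ) : Prop := Nonempty (DTree P e t)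

/-- The HOCRWL denotation `⟦e⟧^P = { t ∈ Pat_⊥ | P ⊢ e ⇒ t }`. -/
def den (P : Program σ) (e : Exp σ) : Set (Exp σ) := {t | IsPPat t ∧ Deriv P e t}

/-- Observations: total patterns in the denotation. -/
def Obs (P : Program σ) (e : Exp σ) : Set (Exp σ) := {t | t ∈ den P e ∧ BotFree t}

/-- First-order observations: first-order patterns in the denotation. -/
def ObsFO (P : Program σ) (e : Exp σ) : Set (Exp σ) := {t | t ∈ den P e ∧ IsFOPat t}

/-- Contexts `C ::= [ ] | C e | e C`. -/
inductive Cntxt (σ : Sig) : Type where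
  | hole : Cntxt σ
  | appL : Cntxt σ → Exp σ → Cntxt σ
  | appR : Exp σ → Cntxt σ → Cntxt σ

/-- Filling the hole of a context with an expression. -/
def Cntxt.fill : Cntxt σ → Exp σ → Exp σ
  | .hole, e => e
  | .appL C e', e => .app (C.fill e) e'
  | .appR e' C, e => .app e' (C.fill e)

/-- Function symbols occurring in an expression. -/
def expFS : Exp σ → Set σ.FS
  | .fn f => {f}
  | .app a b => expFS a ∪ expFS b
  | _ => ∅

/-- Function symbols occurring in a rule. -/
def ruleFS (r : Rule σ) : Set σ.FS :=
  insert r.fn ((⋃ t ∈ r.lhs, expFS t) ∪ expFS r.rhs)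

/-- Function symbols occurring in a program. -/
def progFS (P : Program σ) : Set σ.FS := ⋃ r ∈ P, ruleFS r

/-- Function symbols defined by a program (roots of left-hand sides). -/
def defs (P : Program σ) : Set σ.FS := Rule.fn '' P

/-- `P'` is a safe extension of `(P, e)`: `P' = P ⊎ P''` where `P''` defines no
function symbol occurring in `P` or in `e`. -/
def SafeExt (P P' : Program σ) (e : Exp σ) : Prop :=
  ∃ P'' : Program σ, P' = P ∪ P'' ∧ Disjoint P P'' ∧
    Disjoint (defs P'') (expFS e ∪ progFS P)

/-- `e ∼ₙ e'` : `n`-extensional equivalence. -/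
def ExtEquiv (P : Program σ) (n : ℕ) (e e' : Exp σ) : Prop :=
  ∀ es : List (Exp σ), es.length = n →
    den P (applyList e es) = den P (applyList e' es)

/-- Function symbols of the Example 3 program: `f/1`, `h/1`, `g/1`. -/
inductive Ex3F where | f | h | g

/-- Constructor symbols of the Example 3 program: `0/0`, `1/0`, `2/0`, plus a
constructor `cu` of arity 1 (a constructor of each arity up to the maximum
arity of the function symbols). -/
inductive Ex3C where | c0 | c1 | c2 | cu

/-- The signature of the Example 3 program. -/
def ex3Sig : Sig where
  FS := Ex3F
  CS := Ex3C
  arityF := fun s => match s with | .f => 1 | .h => 1 | .g => 1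
  arityC := fun s => match s with | .c0 => 0 | .c1 => 0 | .c2 => 0 | .cu => 1

/-- The Example 3 program `P = { f 1 → 2, h X → f (Y X) }` (extra variable
`Y`). -/
def ex3Prog : Program ex3Sig :=
  { ⟨.f, [.cn .c1], .cn .c2⟩,
    ⟨.h, [.var 0], .app (.fn .f) (.app (.var 1) (.var 0))⟩ }

/-- The safe extension `P' = P ⊎ { g 0 → 1 }`. -/
def ex3Prog' : Program ex3Sig :=
  ex3Prog ∪ {⟨.g, [.cn .c0], .cn .c1⟩}

/-! ### Auxiliary machinery -/

set_option linter.constructorNameAsVariable false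

/-- The head symbol of an expression. -/
def headOf {σ : Sig} : Exp σ → Exp σ
  | .app a _ => headOf a
  | e => e

/-- The spine of arguments of an expression. -/
def argsOf {σ : Sig} : Exp σ → List (Exp σ)
  | .app a b => argsOf a ++ [b]
  | _ => []

@[simp] lemma headOf_applyList {σ : Sig} (es : List (Exp σ)) :
    ∀ h, headOf (applyList h es) = headOf h := by
  induction es with
  | nil => intro h; rfl
  | cons a es ih =>
    intro h
    show headOf (applyList (Exp.app h a) es) = headOf h
    rw [ih (Exp.app h a)]; rfl

@[simp] lemma argsOf_applyList {σ : Sig} (es : List (Exp σ)) :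
    ∀ h, argsOf (applyList h es) = argsOf h ++ es := by
  induction es with
  | nil => intro h; simp [applyList]
  | cons a es ih =>
    intro h
    show argsOf (applyList (Exp.app h a) es) = argsOf h ++ (a :: es)
    rw [ih (Exp.app h a)]; simp [argsOf]

lemma append_eq_single {α} {l1 l2 : List α} {x : α}
    (h : l1 ++ l2 = [x]) (hl : l1.length = 1) : l1 = [x] ∧ l2 = [] := by
  cases l1 with
  | nil => simp at hl
  | cons a t =>
    cases t with
    | nil => simpa using h
    | cons b t => simp at hl

@[simp] lemma ex3_fn_inj (a b : Ex3F) :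
    ((Exp.fn a : Exp ex3Sig) = Exp.fn b) ↔ a = b := by
  constructor
  · intro h; cases h; rfl
  · intro h; rw [h]

@[simp] lemma ex3_cn_inj (a b : Ex3C) :
    ((Exp.cn a : Exp ex3Sig) = Exp.cn b) ↔ a = b := by
  constructor
  · intro h; cases h; rfl
  · intro h; rw [h]

lemma ex3_mem_iff {r : Rule ex3Sig} (hr : r ∈ ex3Prog) :
    r = ⟨.f, [.cn .c1], .cn .c2⟩ ∨
    r = ⟨.h, [.var 0], .app (.fn .f) (.app (.var 1) (.var 0))⟩ := by
  simp [ex3Prog] at hr; tauto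

lemma ex3'_mem_iff {r : Rule ex3Sig} (hr : r ∈ ex3Prog') :
    r = ⟨.f, [.cn .c1], .cn .c2⟩ ∨
    r = ⟨.h, [.var 0], .app (.fn .f) (.app (.var 1) (.var 0))⟩ ∨
    r = ⟨.g, [.cn .c0], .cn .c1⟩ := by
  simp [ex3Prog', ex3Prog] at hr; tauto

/-- In `ex3Sig` every function symbol has arity 1, so a partial pattern
with a function-symbol head is that bare function symbol. -/
lemma ppat_fn_eq {e : Exp ex3Sig} (hp : IsPPat e) :
    ∀ f : Ex3F, headOf e = .fn f → e = .fn f := by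
  induction hp with
  | var x => intro f hf; simp [headOf] at hf
  | bot => intro f hf; simp [headOf] at hf
  | capp c ts har hts ih => intro f hf; simp [headOf] at hf
  | fapp g ts har hts ih =>
    intro f hf
    have h1 : ex3Sig.arityF g = 1 := by cases g <;> rfl
    rw [h1] at har
    have hts0 : ts = [] := List.length_eq_zero_iff.mp (Nat.lt_one_iff.mp har)
    subst hts0
    simpa [applyList, headOf] using hf

/-- Nothing but `⊥` can be derived from `⊥`. -/
lemma bot_only {σ : Sig} {P : Program σ} {e t : Exp σ} (d : DTree P e t)
    (he : e = Exp.bot) : t = Exp.bot := by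
  cases d with
  | bot => rfl
  | rr x => simp at he
  | dc h es ts hsym hlen hpat ds =>
    have h2 := congrArg headOf he
    simp [headOf] at h2
    have hh : h = Exp.bot := by cases h <;> simp_all [IsSymb, headOf]
    subst hh
    have h1 := congrArg argsOf he
    simp [argsOf] at h1
    have hts : ts = [] := by simpa [h1, List.length_eq_zero_iff] using hlen.symm
    subst hts
    rfl
  | opr r hr θ hθ es as t hlen ds d =>
    have h2 := congrArg headOf he
    simp [headOf] at h2

/-- Nothing but `⊥` and `c` itself can be derived from a constructor `c`. -/
lemma cn_only {σ : Sig} {P : Program σ} {c : σ.CS} {e t : Exp σ}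
    (d : DTree P e t) (he : e = Exp.cn c) : t = Exp.bot ∨ t = Exp.cn c := by
  cases d with
  | bot => exact Or.inl rfl
  | rr x => simp at he
  | dc h es ts hsym hlen hpat ds =>
    have h2 := congrArg headOf he
    simp [headOf] at h2
    have hh : h = Exp.cn c := by cases h <;> simp_all [IsSymb, headOf]
    subst hh
    have h1 := congrArg argsOf he
    simp [argsOf] at h1
    have hts : ts = [] := by simpa [h1, List.length_eq_zero_iff] using hlen.symm
    subst hts
    exact Or.inr rfl
  | opr r hr θ hθ es as t hlen ds d =>
    have h2 := congrArg headOf he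
    simp [headOf] at h2

/-- In `ex3Prog`, the only expression that can evaluate to `1` is `1` itself. -/
lemma ex3_c1_only {e t : Exp ex3Sig} (d : DTree ex3Prog e t) :
    t = .cn .c1 → e = .cn .c1 := by
  induction d with
  | bot e => intro ht; exact absurd ht (by simp)
  | rr x => intro ht; exact absurd ht (by simp)
  | dc h es ts hsym hlen hpat ds ih =>
    intro ht
    have h2 := congrArg headOf ht
    simp [headOf] at h2
    have hh : h = .cn .c1 := by cases h <;> simp_all [IsSymb, headOf]
    subst hh
    have h1 := congrArg argsOf ht
    simp [argsOf] at h1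
    have hes : es = [] := by simpa [h1, List.length_eq_zero_iff] using hlen
    subst hes
    rfl
  | opr r hr θ hθ es as t hlen ds d ih_ds ih_d =>
    intro ht
    rcases ex3_mem_iff hr with hrr | hrr <;> subst hrr <;>
    · have h2 := congrArg headOf (ih_d ht)
      simp [subst, headOf] at h2

/-- In `ex3Prog`, applying `f` to an application only yields `⊥`. -/
lemma ex3_fapp_bot {e t a b : Exp ex3Sig} (d : DTree ex3Prog e t)
    (he : e = .app (.fn .f) (.app a b)) : t = Exp.bot := by
  cases d with
  | bot => rfl
  | rr x => simp at he
  | dc h es ts hsym hlen hpat ds =>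
    have h2 := congrArg headOf he
    simp [headOf] at h2
    have hh : h = .fn .f := by cases h <;> simp_all [IsSymb, headOf]
    subst hh
    have hts : ts = [] := by
      have h4 := ppat_fn_eq hpat Ex3F.f (by simp [headOf])
      have h3 := congrArg argsOf h4
      simpa [argsOf] using h3
    subst hts
    have h1 := congrArg argsOf he
    simp [argsOf] at h1
    simp [h1] at hlen
  | opr r hr θ hθ es as t hlen ds d =>
    have h2 := congrArg headOf he
    simp [headOf] at h2
    rcases ex3_mem_iff hr with hrr | hrr <;> subst hrr
    · -- rule f 1 → 2 : its premise (app a b) ⇒ 1 is impossible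
      have h1 := congrArg argsOf he
      simp [argsOf] at h1
      obtain ⟨hes, has⟩ := append_eq_single h1 (by simpa using hlen)
      subst hes; subst has
      have hd := ds (Exp.app a b, Exp.cn .c1) (by simp [subst])
      have h5 := ex3_c1_only hd rfl
      exact absurd h5 (by simp)
    · simp at h2

/-- In `ex3Prog`, applying `h` to anything only yields `⊥`. -/
lemma ex3_happ_bot {e t u : Exp ex3Sig} (d : DTree ex3Prog e t)
    (he : e = .app (.fn .h) u) : t = Exp.bot := by
  cases d with
  | bot => rfl
  | rr x => simp at he
  | dc h es ts hsym hlen hpat ds =>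
    have h2 := congrArg headOf he
    simp [headOf] at h2
    have hh : h = .fn .h := by cases h <;> simp_all [IsSymb, headOf]
    subst hh
    have hts : ts = [] := by
      have h4 := ppat_fn_eq hpat Ex3F.h (by simp [headOf])
      have h3 := congrArg argsOf h4
      simpa [argsOf] using h3
    subst hts
    have h1 := congrArg argsOf he
    simp [argsOf] at h1
    simp [h1] at hlen
  | opr r hr θ hθ es as t hlen ds d =>
    have h2 := congrArg headOf he
    simp [headOf] at h2
    rcases ex3_mem_iff hr with hrr | hrr <;> subst hrr
    · simp at h2
    · have h1 := congrArg argsOf he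
      simp [argsOf] at h1
      obtain ⟨hes, has⟩ := append_eq_single h1 (by simpa using hlen)
      subst hes; subst has
      exact ex3_fapp_bot d rfl

/-- In `ex3Prog'`, an expression evaluating to `1` is either `1` itself or
`g` applied to something evaluating to `0`. -/
lemma ex3'_c1_shape {e t : Exp ex3Sig} (d : DTree ex3Prog' e t) :
    t = .cn .c1 →
      e = .cn .c1 ∨ ∃ b, e = .app (.fn .g) b ∧ Nonempty (DTree ex3Prog' b (.cn .c0)) := by
  induction d with
  | bot e => intro ht; exact absurd ht (by simp)
  | rr x => intro ht; exact absurd ht (by simp)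
  | dc h es ts hsym hlen hpat ds ih =>
    intro ht
    have h2 := congrArg headOf ht
    simp [headOf] at h2
    have hh : h = .cn .c1 := by cases h <;> simp_all [IsSymb, headOf]
    subst hh
    have h1 := congrArg argsOf ht
    simp [argsOf] at h1
    have hes : es = [] := by simpa [h1, List.length_eq_zero_iff] using hlen
    subst hes
    exact Or.inl rfl
  | opr r hr θ hθ es as t hlen ds d ih_ds ih_d =>
    intro ht
    rcases ex3'_mem_iff hr with hrr | hrr | hrr <;> subst hrr
    · rcases ih_d ht with h2 | ⟨b, h2, -⟩ <;>
      · have h3 := congrArg headOf h2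
        simp [subst, headOf] at h3
    · rcases ih_d ht with h2 | ⟨b, h2, -⟩ <;>
      · have h3 := congrArg headOf h2
        simp [subst, headOf] at h3
    · -- rule g 0 → 1
      rcases ih_d ht with h2 | ⟨b, h2, -⟩
      · -- applyList (cn c1) as = cn c1, so as = []
        have h3 := congrArg argsOf h2
        simp [argsOf, subst] at h3
        subst h3
        obtain ⟨b, hes⟩ : ∃ b, es = [b] := by
          cases es with
          | nil => simp at hlen
          | cons a tl =>
            cases tl with
            | nil => exact ⟨a, rfl⟩
            | cons c tl => simp at hlen
        subst hes
        refine Or.inr ⟨b, rfl, ⟨?_⟩⟩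
        exact ds (b, Exp.cn .c0) (by simp [subst])
      · have h3 := congrArg headOf h2
        simp [subst, headOf] at h3

/-- In `ex3Prog'`, if `f (app a b)` evaluates to `2` then `app a b ⇒ 1`. -/
lemma ex3'_fapp_c2 {e t a b : Exp ex3Sig} (d : DTree ex3Prog' e t)
    (he : e = .app (.fn .f) (.app a b)) (ht : t = .cn .c2) :
    Nonempty (DTree ex3Prog' (.app a b) (.cn .c1)) := by
  cases d with
  | bot => simp at ht
  | rr x => simp at he
  | dc h es ts hsym hlen hpat ds =>
    have h2 := congrArg headOf he
    simp [headOf] at h2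
    have hh : h = .fn .f := by cases h <;> simp_all [IsSymb, headOf]
    subst hh
    have hts : ts = [] := by
      have h4 := ppat_fn_eq hpat Ex3F.f (by simp [headOf])
      have h3 := congrArg argsOf h4
      simpa [argsOf] using h3
    subst hts
    have h1 := congrArg argsOf he
    simp [argsOf] at h1
    simp [h1] at hlen
  | opr r hr θ hθ es as t hlen ds d =>
    have h2 := congrArg headOf he
    simp [headOf] at h2
    rcases ex3'_mem_iff hr with hrr | hrr | hrr <;> subst hrr
    · have h1 := congrArg argsOf he
      simp [argsOf] at h1
      obtain ⟨hes, has⟩ := append_eq_single h1 (by simpa using hlen)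
      subst hes; subst has
      exact ⟨ds (Exp.app a b, Exp.cn .c1) (by simp [subst])⟩
    · simp at h2
    · simp at h2

/-- A constructor evaluates to itself. -/
def dtree_cn {P : Program ex3Sig} (c : Ex3C) : DTree P (.cn c) (.cn c) :=
  @DTree.dc ex3Sig P (Exp.cn c) [] [] trivial rfl
    (@IsPPat.capp ex3Sig c [] (Nat.zero_le _) (fun t ht => by simp at ht))
    (fun p hp => by simp at hp)

lemma ppat_fng : IsPPat (Exp.fn Ex3F.g : Exp ex3Sig) := by
  have h : (Exp.fn Ex3F.g : Exp ex3Sig) = applyList (Exp.fn Ex3F.g) [] := rfl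
  rw [h]
  exact @IsPPat.fapp ex3Sig Ex3F.g [] (by decide) (fun t ht => by simp at ht)

lemma ppat_cn (c : Ex3C) : IsPPat (Exp.cn c : Exp ex3Sig) := by
  have h : (Exp.cn c : Exp ex3Sig) = applyList (Exp.cn c) [] := rfl
  rw [h]
  exact @IsPPat.capp ex3Sig c [] (Nat.zero_le _) (fun t ht => by simp at ht)

/-- In `ex3Prog'`, `h 1` does not evaluate to `2`. -/
lemma ex3'_h1_not_c2 {e t : Exp ex3Sig} (d : DTree ex3Prog' e t)
    (he : e = .app (.fn .h) (.cn .c1)) (ht : t = .cn .c2) : False := by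
  cases d with
  | bot => simp at ht
  | rr x => simp at he
  | dc h es ts hsym hlen hpat ds =>
    have h2 := congrArg headOf he
    simp [headOf] at h2
    have hh : h = .fn .h := by cases h <;> simp_all [IsSymb, headOf]
    subst hh
    have hts : ts = [] := by
      have h4 := ppat_fn_eq hpat Ex3F.h (by simp [headOf])
      have h3 := congrArg argsOf h4
      simpa [argsOf] using h3
    subst hts
    have h1 := congrArg argsOf he
    simp [argsOf] at h1
    simp [h1] at hlen
  | opr r hr θ hθ es as t hlen ds d =>
    have h2 := congrArg headOf he
    simp [headOf] at h2
    subst ht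
    rcases ex3'_mem_iff hr with hrr | hrr | hrr <;> subst hrr
    · simp at h2
    · have h1 := congrArg argsOf he
      simp [argsOf] at h1
      obtain ⟨hes, has⟩ := append_eq_single h1 (by simpa using hlen)
      subst hes; subst has
      have d0 := ds (Exp.cn .c1, subst θ (.var 0)) (by simp)
      have hθ0 := cn_only d0 rfl
      obtain ⟨d1⟩ := ex3'_fapp_c2 (a := θ 1) (b := θ 0) d rfl rfl
      rcases ex3'_c1_shape d1 rfl with h3 | ⟨b, h3, ⟨db⟩⟩
      · simp at h3
      · have hb : θ 0 = b := by injection h3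
        subst hb
        rcases hθ0 with h4 | h4
        · have := bot_only db h4
          simp at this
        · rcases cn_only db h4 with h5 | h5 <;> simp at h5
    · simp at h2

/-! the main theorem -/

/-- **Example 3**: for every partial pattern `φ`,
`1 ∉ ⟦φ 0⟧^P ∪ ⟦φ 1⟧^P`, hence `⟦h 0⟧^P = {⊥} = ⟦h 1⟧^P`; but for the safe
extension `P' = P ⊎ { g 0 → 1 }`, `2 ∈ ⟦h 0⟧^{P'}` while `2 ∉ ⟦h 1⟧^{P'}`:
extra variables destroy full abstraction even with constructors of every
needed arity. -/
theorem ex3_fullAbstraction_fails :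
    (∀ φ : Exp ex3Sig, IsPPat φ →
      Exp.cn Ex3C.c1 ∉
        den ex3Prog (.app φ (.cn .c0)) ∪ den ex3Prog (.app φ (.cn .c1))) ∧
    den ex3Prog (.app (.fn .h) (.cn .c0)) = {Exp.bot} ∧
    den ex3Prog (.app (.fn .h) (.cn .c1)) = {Exp.bot} ∧
    SafeExt ex3Prog ex3Prog' (.app (.fn .h) (.cn .c0)) ∧
    SafeExt ex3Prog ex3Prog' (.app (.fn .h) (.cn .c1)) ∧
    (Exp.cn Ex3C.c2 ∈ den ex3Prog' (.app (.fn .h) (.cn .c0))) ∧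
    (Exp.cn Ex3C.c2 ∉ den ex3Prog' (.app (.fn .h) (.cn .c1))) := by
  refine ⟨?_, ?_, ?_, ?_, ?_, ?_, ?_⟩
  · -- 1 ∉ ⟦φ 0⟧ ∪ ⟦φ 1⟧
    rintro φ hφ (⟨-, ⟨d⟩⟩ | ⟨-, ⟨d⟩⟩) <;>
    · have h := ex3_c1_only d rfl
      simp at h
  · -- ⟦h 0⟧ = {⊥}
    ext t
    constructor
    · rintro ⟨-, ⟨d⟩⟩
      have := ex3_happ_bot d rfl
      simp [this]
    · intro ht
      rcases ht with rfl
      exact ⟨IsPPat.bot, ⟨DTree.bot _⟩⟩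
  · -- ⟦h 1⟧ = {⊥}
    ext t
    constructor
    · rintro ⟨-, ⟨d⟩⟩
      have := ex3_happ_bot d rfl
      simp [this]
    · intro ht
      rcases ht with rfl
      exact ⟨IsPPat.bot, ⟨DTree.bot _⟩⟩
  · -- SafeExt for h 0
    refine ⟨_, rfl, ?_, ?_⟩
    · rw [Set.disjoint_singleton_right]
      simp [ex3Prog]
      constructor <;> intro h <;> cases congrArg Rule.fn h
    · rw [Set.disjoint_left]
      intro a ha hmem
      simp [defs] at ha
      subst ha
      simp [expFS, progFS, ruleFS, ex3Prog, expFS] at hmem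
      rcases hmem with h | (h | h) | h | h <;> cases h
  · -- SafeExt for h 1
    refine ⟨_, rfl, ?_, ?_⟩
    · rw [Set.disjoint_singleton_right]
      simp [ex3Prog]
      constructor <;> intro h <;> cases congrArg Rule.fn h
    · rw [Set.disjoint_left]
      intro a ha hmem
      simp [defs] at ha
      subst ha
      simp [expFS, progFS, ruleFS, ex3Prog, expFS] at hmem
      rcases hmem with h | (h | h) | h | h <;> cases h
  · -- 2 ∈ ⟦h 0⟧^{P'}
    refine ⟨ppat_cn Ex3C.c2, ⟨?_⟩⟩
    -- derivation for h 0 ⇒ 2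
    have θ' : ℕ → Exp ex3Sig := fun _ => Exp.bot
    have tg : DTree ex3Prog' (.app (.fn .g) (.cn .c0)) (.cn .c1) :=
      DTree.opr (⟨.g, [.cn .c0], .cn .c1⟩ : Rule ex3Sig) (Or.inr rfl) (fun _ => Exp.bot)
        (fun _ => IsPPat.bot) [.cn .c0] [] (.cn .c1) rfl
        (fun p hp => by
          have hp' : p = (Exp.cn Ex3C.c0, Exp.cn Ex3C.c0) := by simpa [subst] using hp
          rw [hp']
          exact dtree_cn Ex3C.c0)
        (dtree_cn Ex3C.c1)
    have tf : DTree ex3Prog' (.app (.fn .f) (.app (.fn .g) (.cn .c0))) (.cn .c2) :=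
      DTree.opr (⟨.f, [.cn .c1], .cn .c2⟩ : Rule ex3Sig) (Or.inl (Or.inl rfl)) (fun _ => Exp.bot)
        (fun _ => IsPPat.bot) [.app (.fn .g) (.cn .c0)] [] (.cn .c2) rfl
        (fun p hp => by
          have hp' : p = (Exp.app (Exp.fn Ex3F.g) (Exp.cn Ex3C.c0), Exp.cn Ex3C.c1) := by
            simpa [subst] using hp
          rw [hp']
          exact tg)
        (dtree_cn Ex3C.c2)
    exact DTree.opr (⟨.h, [.var 0], .app (.fn .f) (.app (.var 1) (.var 0))⟩ : Rule ex3Sig)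
      (Or.inl (Or.inr rfl))
      (fun n => if n = 1 then Exp.fn Ex3F.g else Exp.cn Ex3C.c0)
      (fun n => by
        by_cases hn : n = 1
        · simpa [hn] using ppat_fng
        · simpa [hn] using ppat_cn Ex3C.c0)
      [.cn .c0] [] (.cn .c2) rfl
      (fun p hp => by
        have hp' : p = (Exp.cn Ex3C.c0, Exp.cn Ex3C.c0) := by simpa [subst] using hp
        rw [hp']
        exact dtree_cn Ex3C.c0)
      tf
  · -- 2 ∉ ⟦h 1⟧^{P'}
    rintro ⟨-, ⟨d⟩⟩
    exact ex3'_h1_not_c2 d rfl rfl
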